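/- Let S₁,…,S_R be linear subspaces of ℝⁿ, S = ⋃ᵣ Sᵣ, x* ∈ S, and d ∈ T_S(x*) a tangent direction. Then the Fréchet normal cone to the tangent cone T_S(x*) at d equals ⋂_{r ∈ I(x*) ∩ I(d)} Sᵣ^⊥, where I(y) = {r : y ∈ Sᵣ}. -/

import Mathlib

open Filter Topology Metric Set
open scoped Classical

noncomputable section

abbrev E (n : ℕ) := EuclideanSpace ℝ (Fin n)

/-- Bouligand tangent cone. -/
def bouligand {n : ℕ} (S : Set (E n)) (x : E n) : Set (E n) :=
  {d | ∃ t : ℕ → ℝ, ∃ dk : ℕ → E n,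
    (∀ k, 0 < t k) ∧ Tendsto t atTop (𝓝 0) ∧ Tendsto dk atTop (𝓝 d) ∧
    ∀ k, x + t k • dk k ∈ S}

/-- Fréchet (regular) normal cone. -/
def frechetNormal {n : ℕ} (S : Set (E n)) (x : E n) : Set (E n) :=
  {v | ∀ ε > (0 : ℝ), ∃ δ > (0 : ℝ), ∀ y ∈ S, ‖y - x‖ < δ →
    (inner ℝ v (y - x) : ℝ) ≤ ε * ‖y - x‖}

/-- Mordukhovich (limiting) normal cone. -/
def limitingNormal {n : ℕ} (S : Set (E n)) (x : E n) : Set (E n) :=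
  {v | ∃ xk : ℕ → E n, ∃ vk : ℕ → E n,
    (∀ k, xk k ∈ S) ∧ Tendsto xk atTop (𝓝 x) ∧
    (∀ k, vk k ∈ frechetNormal S (xk k)) ∧ Tendsto vk atTop (𝓝 v)}

/-- Directional limiting normal cone. -/
def dirLimitingNormal {n : ℕ} (S : Set (E n)) (x d : E n) : Set (E n) :=
  {v | ∃ t : ℕ → ℝ, ∃ dk : ℕ → E n, ∃ vk : ℕ → E n,
    (∀ k, 0 < t k) ∧ Tendsto t atTop (𝓝 0) ∧ Tendsto dk atTop (𝓝 d) ∧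
    Tendsto vk atTop (𝓝 v) ∧ ∀ k, vk k ∈ frechetNormal S (x + t k • dk k)}


lemma bouligand_union_eq {n R : ℕ} (V : Fin R → Submodule ℝ (E n)) (x : E n) :
    bouligand (⋃ r, (V r : Set (E n))) x
      = ⋃ r ∈ {r : Fin R | x ∈ V r}, (V r : Set (E n)) := by
  ext d
  simp only [Set.mem_iUnion, Set.mem_setOf_eq, exists_prop]
  constructor
  · rintro ⟨t, dk, ht, ht0, hdk, hmem⟩
    have hpig : ∃ r : Fin R, {k | x + t k • dk k ∈ V r}.Infinite := by
      by_contra h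
      push_neg at h
      have hfin : (⋃ r, {k | x + t k • dk k ∈ V r}).Finite := Set.finite_iUnion h
      have hsub : (Set.univ : Set ℕ) ⊆ ⋃ r, {k | x + t k • dk k ∈ V r} := by
        intro k _
        have := hmem k
        rw [Set.mem_iUnion] at this
        obtain ⟨r, hr⟩ := this
        exact Set.mem_iUnion.2 ⟨r, hr⟩
      exact Set.infinite_univ (hfin.subset hsub)
    obtain ⟨r, hr⟩ := hpig
    obtain ⟨φ, hφ, hφmem⟩ := Filter.extraction_of_frequently_atTop
      ((Nat.frequently_atTop_iff_infinite).2 hr)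
    have htφ : Tendsto (fun k => t (φ k)) atTop (𝓝 0) := ht0.comp hφ.tendsto_atTop
    have hdkφ : Tendsto (fun k => dk (φ k)) atTop (𝓝 d) := hdk.comp hφ.tendsto_atTop
    have hsmul : Tendsto (fun k => t (φ k) • dk (φ k)) atTop (𝓝 ((0:ℝ) • d)) :=
      htφ.smul hdkφ
    rw [zero_smul] at hsmul
    have hclosed : IsClosed ((V r : Set (E n))) := (V r).closed_of_finiteDimensional
    have hxVr : x ∈ V r := by
      have hten : Tendsto (fun k => x + t (φ k) • dk (φ k)) atTop (𝓝 (x + 0)) :=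
        tendsto_const_nhds.add hsmul
      rw [add_zero] at hten
      exact hclosed.mem_of_tendsto hten (Filter.Eventually.of_forall hφmem)
    refine ⟨r, hxVr, ?_⟩
    have hdkmem : ∀ k, dk (φ k) ∈ V r := by
      intro k
      have h1 : t (φ k) • dk (φ k) ∈ V r := by
        have := (V r).sub_mem (hφmem k) hxVr
        simpa using this
      have h2 : (t (φ k))⁻¹ • (t (φ k) • dk (φ k)) ∈ V r := (V r).smul_mem _ h1
      rwa [smul_smul, inv_mul_cancel₀ (ne_of_gt (ht (φ k))), one_smul] at h2
    exact hclosed.mem_of_tendsto hdkφ (Filter.Eventually.of_forall hdkmem)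
  · rintro ⟨r, hxr, hdr⟩
    refine ⟨fun k => 1 / (k + 1), fun _ => d, fun k => by positivity,
      tendsto_one_div_add_atTop_nhds_zero_nat, tendsto_const_nhds, fun k => ?_⟩
    exact Set.mem_iUnion.2 ⟨r, (V r).add_mem hxr ((V r).smul_mem _ hdr)⟩

lemma frechet_union_eq {n R : ℕ} (V : Fin R → Submodule ℝ (E n)) (x d : E n) :
    frechetNormal (⋃ r ∈ {r : Fin R | x ∈ V r}, (V r : Set (E n))) d
      = ⋂ r ∈ {r : Fin R | x ∈ V r ∧ d ∈ V r}, ((V r)ᗮ : Set (E n)) := by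
  ext v
  simp only [Set.mem_iInter, Set.mem_setOf_eq, SetLike.mem_coe]
  constructor
  · intro hv r ⟨hxr, hdr⟩
    rw [Submodule.mem_orthogonal]
    intro w hw
    rw [real_inner_comm]
    have key : ∀ w ∈ V r, (inner ℝ v w : ℝ) ≤ 0 := by
      intro w hw
      rcases eq_or_ne w 0 with rfl | hw0
      · simp
      have hnw : (0:ℝ) < ‖w‖ := norm_pos_iff.2 hw0
      have hle : ∀ ε > (0:ℝ), (inner ℝ v w : ℝ) ≤ ε * ‖w‖ := by
        intro ε hε
        obtain ⟨δ, hδ, hδ'⟩ := hv ε hε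
        set s : ℝ := δ / (2 * ‖w‖) with hs
        have hspos : 0 < s := by positivity
        have hy : d + s • w ∈ ⋃ r ∈ {r : Fin R | x ∈ V r}, (V r : Set (E n)) := by
          simp only [Set.mem_iUnion, Set.mem_setOf_eq, exists_prop]
          exact ⟨r, hxr, (V r).add_mem hdr ((V r).smul_mem _ hw)⟩
        have hnorm : ‖d + s • w - d‖ = s * ‖w‖ := by
          rw [add_sub_cancel_left, norm_smul, Real.norm_of_nonneg hspos.le]
        have hlt : ‖d + s • w - d‖ < δ := by
          rw [hnorm, hs]
          rw [div_mul_eq_mul_div, mul_comm]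
          rw [div_lt_iff₀ (by positivity)]
          nlinarith
        have h0 := hδ' _ hy hlt
        rw [add_sub_cancel_left, real_inner_smul_right, norm_smul,
          Real.norm_of_nonneg hspos.le] at h0
        nlinarith [hspos]
      by_contra hcon
      push_neg at hcon
      have := hle ((inner ℝ v w : ℝ) / (2 * ‖w‖)) (by positivity)
      rw [div_mul_eq_mul_div] at this
      have heq : (inner ℝ v w : ℝ) * ‖w‖ / (2 * ‖w‖) = (inner ℝ v w : ℝ) / 2 := by
        field_simp
      rw [heq] at this
      linarith
    have h1 := key w hw
    have h2 := key (-w) ((V r).neg_mem hw)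
    rw [inner_neg_right] at h2
    linarith
  · intro hv ε hε
    classical
    set s : Finset (Fin R) := Finset.univ.filter (fun r => x ∈ V r ∧ d ∉ V r) with hsdef
    set T : Finset ℝ := insert (1:ℝ) (s.image (fun r => Metric.infDist d (V r : Set (E n)))) with hT
    have hTne : T.Nonempty := ⟨1, Finset.mem_insert_self _ _⟩
    set δ : ℝ := T.min' hTne with hδdef
    have hδpos : 0 < δ := by
      have hpos : ∀ a ∈ T, 0 < a := by
        intro a ha
        rw [hT, Finset.mem_insert] at ha
        rcases ha with rfl | h2
        · norm_num
        · obtain ⟨r, hrs, rfl⟩ := Finset.mem_image.1 h2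
          rw [hsdef, Finset.mem_filter] at hrs
          exact ((V r).closed_of_finiteDimensional.notMem_iff_infDist_pos
            ⟨0, (V r).zero_mem⟩).1 hrs.2.2
      exact hpos _ (T.min'_mem hTne)
    refine ⟨δ, hδpos, ?_⟩
    intro y hy hylt
    simp only [Set.mem_iUnion, Set.mem_setOf_eq, exists_prop] at hy
    obtain ⟨r, hxr, hyr⟩ := hy
    by_cases hdr : d ∈ V r
    · have hperp := hv r ⟨hxr, hdr⟩
      have : (inner ℝ v (y - d) : ℝ) = 0 := by
        rw [real_inner_comm]
        exact (Submodule.mem_orthogonal _ _).1 hperp _ ((V r).sub_mem hyr hdr)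
      rw [this]
      positivity
    · exfalso
      have hrs : r ∈ s := by simp [hsdef, hxr, hdr]
      have hδle : δ ≤ Metric.infDist d (V r : Set (E n)) :=
        Finset.min'_le _ _ (Finset.mem_insert_of_mem (Finset.mem_image_of_mem _ hrs))
      have hinf : Metric.infDist d (V r : Set (E n)) ≤ dist d y :=
        Metric.infDist_le_dist_of_mem hyr
      rw [dist_eq_norm] at hinf
      have : ‖d - y‖ = ‖y - d‖ := norm_sub_rev _ _
      linarith

theorem stmt5 {n R : ℕ} (V : Fin R → Submodule ℝ (E n))
    (x : E n) (hx : x ∈ ⋃ r, (V r : Set (E n)))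
    (d : E n) (hd : d ∈ bouligand (⋃ r, (V r : Set (E n))) x) :
    frechetNormal (bouligand (⋃ r, (V r : Set (E n))) x) d
      = ⋂ r ∈ {r : Fin R | x ∈ V r ∧ d ∈ V r}, ((V r)ᗮ : Set (E n)) := by
  rw [bouligand_union_eq V x]
  exact frechet_union_eq V x d
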